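/- Let L = ℤ[T,T⁻¹] and let x : (Fin k → ℕ) → L satisfy the Jones recurrence in each coordinate: for every i : Fin k and A : Fin k → ℕ, x(A[i ↦ A i + 2]) = (T³ − T)·x(A[i ↦ A i + 1]) + T⁴·x(A). Let G ∈ MvPowerSeries (Fin k) L be the power series whose coefficient at each monomial A : Fin k →₀ ℕ is x(A). For each i set, in MvPowerSeries (Fin k) L, q_i = (1 − T³·X_i)·(1 + T·X_i), Q₀,ᵢ = 1 − (T³ − T)·X_i, and Q₁,ᵢ = X_i, where X_i is the i-th indeterminate. Then (∏ i, q_i) · G = ∑ over all J : Fin k → Fin 2 of (∏ i, Q_{J i},ᵢ) · x(J), where x(J) is viewed as a constant power series. -/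

import Mathlib

open LaurentPolynomial MvPowerSeries Finsupp


noncomputable def Eser (k : ℕ) (f : (Fin k → ℕ) → LaurentPolynomial ℤ)
    (s : Finset (Fin k)) : MvPowerSeries (Fin k) (LaurentPolynomial ℤ) :=
  show (Fin k →₀ ℕ) → LaurentPolynomial ℤ from
    fun A => if ∀ i ∈ s, A i = 0 then f ⇑A else 0

lemma coeff_Eser {k : ℕ} (f : (Fin k → ℕ) → LaurentPolynomial ℤ)
    (s : Finset (Fin k)) (A : Fin k →₀ ℕ) :
    MvPowerSeries.coeff A (Eser k f s)
      = if ∀ i ∈ s, A i = 0 then f ⇑A else 0 := rfl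

lemma coeff_X_pow_mul' {k : ℕ} (i : Fin k) (n : ℕ)
    (F : MvPowerSeries (Fin k) (LaurentPolynomial ℤ)) (A : Fin k →₀ ℕ) :
    MvPowerSeries.coeff A (MvPowerSeries.X i ^ n * F)
      = if n ≤ A i then
          MvPowerSeries.coeff (A - Finsupp.single i n) F else 0 := by
  rw [MvPowerSeries.X_pow_eq, MvPowerSeries.coeff_monomial_mul]
  simp [Finsupp.single_le_iff]

lemma sub_single_coe {k : ℕ} (A : Fin k →₀ ℕ) (i : Fin k) (m : ℕ) :
    ⇑(A - Finsupp.single i m) = Function.update ⇑A i (A i - m) := by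
  funext j
  rcases eq_or_ne j i with rfl | hj
  · simp [Finsupp.tsub_apply]
  · simp [Finsupp.tsub_apply, Function.update_of_ne hj, Finsupp.single_eq_of_ne' (Ne.symm hj)]

lemma key {k : ℕ} (a b : LaurentPolynomial ℤ) (f : (Fin k → ℕ) → LaurentPolynomial ℤ)
    (s : Finset (Fin k)) (i : Fin k) (hi : i ∉ s)
    (hf : ∀ A : Fin k → ℕ, f (Function.update A i (A i + 2))
        = a * f (Function.update A i (A i + 1)) + b * f A) :
    (1 - (MvPowerSeries.C (σ := Fin k) (R := LaurentPolynomial ℤ)) a * MvPowerSeries.X i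
       - (MvPowerSeries.C (σ := Fin k) (R := LaurentPolynomial ℤ)) b * MvPowerSeries.X i ^ 2) * Eser k f s
    = (1 - (MvPowerSeries.C (σ := Fin k) (R := LaurentPolynomial ℤ)) a * MvPowerSeries.X i)
        * Eser k (fun A => f (Function.update A i 0)) (insert i s)
      + MvPowerSeries.X i * Eser k (fun A => f (Function.update A i 1)) (insert i s) := by
  classical
  have e1 : (1 - (MvPowerSeries.C (σ := Fin k) (R := LaurentPolynomial ℤ)) a * MvPowerSeries.X i
       - (MvPowerSeries.C (σ := Fin k) (R := LaurentPolynomial ℤ)) b * MvPowerSeries.X i ^ 2) * Eser k f s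
      = Eser k f s
        - (MvPowerSeries.C (σ := Fin k) (R := LaurentPolynomial ℤ)) a * (MvPowerSeries.X i ^ 1 * Eser k f s)
        - (MvPowerSeries.C (σ := Fin k) (R := LaurentPolynomial ℤ)) b
            * (MvPowerSeries.X i ^ 2 * Eser k f s) := by ring
  have e2 : (1 - (MvPowerSeries.C (σ := Fin k) (R := LaurentPolynomial ℤ)) a * MvPowerSeries.X i)
        * Eser k (fun A => f (Function.update A i 0)) (insert i s)
      + MvPowerSeries.X i * Eser k (fun A => f (Function.update A i 1)) (insert i s)
      = Eser k (fun A => f (Function.update A i 0)) (insert i s)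
        - (MvPowerSeries.C (σ := Fin k) (R := LaurentPolynomial ℤ)) a
            * (MvPowerSeries.X i ^ 1 * Eser k (fun A => f (Function.update A i 0)) (insert i s))
        + MvPowerSeries.X i ^ 1
            * Eser k (fun A => f (Function.update A i 1)) (insert i s) := by ring
  rw [e1, e2]
  refine MvPowerSeries.ext fun A => ?_
  simp only [map_sub, map_add, MvPowerSeries.coeff_C_mul, coeff_X_pow_mul', coeff_Eser,
    Finset.forall_mem_insert, sub_single_coe]
  obtain h0 | h1 | h2 : A i = 0 ∨ A i = 1 ∨ 2 ≤ A i := by omega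
  · have hup : Function.update (⇑A) i 0 = ⇑A := by
      funext j
      rcases eq_or_ne j i with rfl | hj
      · simp [h0]
      · simp [Function.update_of_ne hj]
    simp [h0, hup]
  · have c1 : (1:ℕ) ≤ A i := by omega
    have c2 : ¬ (2:ℕ) ≤ A i := by omega
    have c0 : ¬ A i = 0 := by omega
    rw [show A i - 1 = 0 from by omega]
    have hq0 : Function.update (Function.update (⇑A) i 0) i 1 = ⇑A := by
      rw [Function.update_idem]
      funext j
      rcases eq_or_ne j i with rfl | hj
      · simp [h1]
      · simp [Function.update_of_ne hj]
    have hq1 : Function.update (Function.update (⇑A) i 0) i 0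
        = Function.update (⇑A) i 0 := by rw [Function.update_idem]
    have hps : (∀ x ∈ s, Function.update (⇑A) i 0 x = 0) ↔ (∀ x ∈ s, A x = 0) :=
      forall₂_congr fun j hj => by
        rw [Function.update_of_ne (ne_of_mem_of_not_mem hj hi)]
    by_cases hp : ∀ x ∈ s, A x = 0
    · simp [c1, c2, c0, hq0, hq1, hps, hp, Function.update_self]
      ring
    · simp [c1, c2, c0, hq0, hq1, hps, hp, Function.update_self]
  · have c1 : (1:ℕ) ≤ A i := by omega
    have c2 : (2:ℕ) ≤ A i := by omega
    have c0 : ¬ A i = 0 := by omega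
    have cm1 : ¬ (A i - 1 = 0) := by omega
    have hps : ∀ m : ℕ, (∀ x ∈ s, Function.update (⇑A) i m x = 0) ↔ (∀ x ∈ s, A x = 0) :=
      fun m => forall₂_congr fun j hj => by
        rw [Function.update_of_ne (ne_of_mem_of_not_mem hj hi)]
    have hrec : f ⇑A = a * f (Function.update (⇑A) i (A i - 1))
        + b * f (Function.update (⇑A) i (A i - 2)) := by
      have h := hf (Function.update (⇑A) i (A i - 2))
      rw [Function.update_self, Function.update_idem, Function.update_idem,
        show A i - 2 + 2 = A i from by omega, show A i - 2 + 1 = A i - 1 from by omega,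
        Function.update_eq_self] at h
      exact h
    by_cases hp : ∀ x ∈ s, A x = 0
    · simp [c1, c2, c0, cm1, hps, hp, Function.update_self, hrec]
      simp only [if_pos hp]
      ring
    · simp [c1, c2, c0, cm1, hps, hp, Function.update_self]


lemma reindex {k : ℕ} {M : Type*} [AddCommMonoid M] (s : Finset (Fin k)) (i : Fin k)
    (hi : i ∉ s) (F : (Fin k → Fin 2) → M) :
    ∑ J ∈ Finset.univ.filter (fun J : Fin k → Fin 2 => ∀ j, j ∉ insert i s → J j = 0), F J
    = ∑ J ∈ Finset.univ.filter (fun J : Fin k → Fin 2 => ∀ j, j ∉ s → J j = 0),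
        (F (Function.update J i 0) + F (Function.update J i 1)) := by
  classical
  have h2 : ∀ J : Fin k → Fin 2, F (Function.update J i 0) + F (Function.update J i 1)
      = ∑ v : Fin 2, F (Function.update J i v) := by
    intro J; rw [Fin.sum_univ_two]
  simp_rw [h2]
  rw [← Finset.sum_product']
  refine Finset.sum_nbij' (fun J => (Function.update J i 0, J i))
    (fun p => Function.update p.1 i p.2) ?_ ?_ ?_ ?_ ?_
  · intro J hJ
    simp only [Finset.mem_filter, Finset.mem_univ, true_and] at hJ ⊢
    rw [Finset.mem_product]
    refine ⟨Finset.mem_filter.2 ⟨Finset.mem_univ _, fun j hj => ?_⟩, Finset.mem_univ _⟩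
    rcases eq_or_ne j i with rfl | hji
    · simp
    · show Function.update J i 0 j = 0
      rw [Function.update_of_ne hji]
      exact hJ j (by simp [hji, hj])
  · intro p hp
    rw [Finset.mem_product] at hp
    obtain ⟨hp1, -⟩ := hp
    simp only [Finset.mem_filter, Finset.mem_univ, true_and] at hp1 ⊢
    intro j hj
    rw [Finset.mem_insert, not_or] at hj
    rw [Function.update_of_ne hj.1]
    exact hp1 j hj.2
  · intro J hJ
    simp only [Finset.mem_filter, Finset.mem_univ, true_and] at hJ
    simp [Function.update_idem, Function.update_self, Function.update_eq_self]
  · intro p hp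
    rw [Finset.mem_product] at hp
    obtain ⟨hp1, -⟩ := hp
    simp only [Finset.mem_filter, Finset.mem_univ, true_and] at hp1
    have : p.1 i = 0 := hp1 i hi
    simp [Function.update_idem, Function.update_self, ← this, Function.update_eq_self]
  · intro J hJ
    simp [Function.update_idem, Function.update_eq_self]


lemma main_sum {k : ℕ} (x : (Fin k → ℕ) → LaurentPolynomial ℤ) (a b : LaurentPolynomial ℤ)
    (hx : ∀ (i : Fin k) (A : Fin k → ℕ),
      x (Function.update A i (A i + 2)) = a * x (Function.update A i (A i + 1)) + b * x A)
    (s : Finset (Fin k)) :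
    (∏ i ∈ s, (1 - (MvPowerSeries.C (σ := Fin k) (R := LaurentPolynomial ℤ)) a * MvPowerSeries.X i
        - (MvPowerSeries.C (σ := Fin k) (R := LaurentPolynomial ℤ)) b * MvPowerSeries.X i ^ 2))
        * Eser k x ∅
    = ∑ J ∈ Finset.univ.filter (fun J : Fin k → Fin 2 => ∀ j, j ∉ s → J j = 0),
        (∏ i ∈ s, if J i = 0 then
            1 - (MvPowerSeries.C (σ := Fin k) (R := LaurentPolynomial ℤ)) a * MvPowerSeries.X i
          else MvPowerSeries.X i)
          * Eser k (fun A => x fun j => if j ∈ s then (J j : ℕ) else A j) s := by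
  classical
  induction s using Finset.induction_on with
  | empty =>
      rw [Finset.prod_empty, one_mul]
      have hfilter : Finset.univ.filter
          (fun J : Fin k → Fin 2 => ∀ j, j ∉ (∅ : Finset (Fin k)) → J j = 0)
          = {fun _ => 0} := by
        ext J; simp [funext_iff]
      rw [hfilter, Finset.sum_singleton, Finset.prod_empty, one_mul]
      congr 1
  | @insert i s hi ih =>
      rw [Finset.prod_insert hi, mul_assoc, ih, Finset.mul_sum, reindex s i hi]
      refine Finset.sum_congr rfl fun J hJ => ?_
      have hJ' : ∀ j ∉ s, J j = 0 := (Finset.mem_filter.1 hJ).2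
      have hJi : J i = 0 := hJ' i hi
      set g : (Fin k → ℕ) → LaurentPolynomial ℤ :=
        fun A => x fun j => if j ∈ s then (J j : ℕ) else A j with hg
      have hblend : ∀ (A : Fin k → ℕ) (m : ℕ),
          (fun j => if j ∈ s then ((J j : ℕ)) else Function.update A i m j)
          = Function.update (fun j => if j ∈ s then (J j : ℕ) else A j) i m := by
        intro A m; funext j
        rcases eq_or_ne j i with rfl | hj
        · simp [hi]
        · rw [Function.update_of_ne hj, Function.update_of_ne hj]
      have hrec : ∀ A : Fin k → ℕ, g (Function.update A i (A i + 2))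
          = a * g (Function.update A i (A i + 1)) + b * g A := by
        intro A
        have h := hx i (fun j => if j ∈ s then (J j : ℕ) else A j)
        simp only [if_neg hi] at h
        simp only [hg, hblend]
        exact h
      have hprod : ∀ v : Fin 2,
          (∏ i' ∈ insert i s, if Function.update J i v i' = 0 then
              1 - (MvPowerSeries.C (σ := Fin k) (R := LaurentPolynomial ℤ)) a * MvPowerSeries.X i'
            else MvPowerSeries.X i')
          = (if v = 0 then
              1 - (MvPowerSeries.C (σ := Fin k) (R := LaurentPolynomial ℤ)) a * MvPowerSeries.X i
            else MvPowerSeries.X i)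
            * ∏ i' ∈ s, (if J i' = 0 then
              1 - (MvPowerSeries.C (σ := Fin k) (R := LaurentPolynomial ℤ)) a * MvPowerSeries.X i'
            else MvPowerSeries.X i') := by
        intro v
        rw [Finset.prod_insert hi, Function.update_self]
        congr 1
        exact Finset.prod_congr rfl fun j hj => by
          rw [Function.update_of_ne (ne_of_mem_of_not_mem hj hi)]
      have hfun : ∀ v : Fin 2,
          (fun A => x fun j => if j ∈ insert i s then ((Function.update J i v j : ℕ)) else A j)
          = fun A => g (Function.update A i (v : ℕ)) := by
        intro v
        funext A
        simp only [hg]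
        congr 1
        funext j
        rcases eq_or_ne j i with rfl | hj
        · simp [hi]
        · rw [Function.update_of_ne hj, Function.update_of_ne hj]
          by_cases hjs : j ∈ s
          · simp [hjs]
          · simp [hjs, hj]
      rw [hprod 0, hprod 1, hfun 0, hfun 1]
      have h0 : ((0 : Fin 2) : ℕ) = 0 := rfl
      have h1 : ((1 : Fin 2) : ℕ) = 1 := rfl
      rw [h0, h1, if_pos rfl, if_neg (by decide : ¬ (1 : Fin 2) = 0)]
      have hkey := key a b g s i hi hrec
      calc (1 - (MvPowerSeries.C (σ := Fin k) (R := LaurentPolynomial ℤ)) a * MvPowerSeries.X i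
            - (MvPowerSeries.C (σ := Fin k) (R := LaurentPolynomial ℤ)) b * MvPowerSeries.X i ^ 2)
          * ((∏ i' ∈ s, if J i' = 0 then
              1 - (MvPowerSeries.C (σ := Fin k) (R := LaurentPolynomial ℤ)) a * MvPowerSeries.X i'
            else MvPowerSeries.X i') * Eser k g s)
          = (∏ i' ∈ s, if J i' = 0 then
              1 - (MvPowerSeries.C (σ := Fin k) (R := LaurentPolynomial ℤ)) a * MvPowerSeries.X i'
            else MvPowerSeries.X i')
            * ((1 - (MvPowerSeries.C (σ := Fin k) (R := LaurentPolynomial ℤ)) a * MvPowerSeries.X i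
              - (MvPowerSeries.C (σ := Fin k) (R := LaurentPolynomial ℤ)) b * MvPowerSeries.X i ^ 2)
              * Eser k g s) := by ring
        _ = _ := by rw [hkey]; ring

open LaurentPolynomial in
/-- **Theorem 1.3** (generating function for Jones polynomials, algebraic form).
If `x : (Fin k → ℕ) → ℤ[T,T⁻¹]` satisfies the Jones recurrence in each coordinate
and `G` is the multivariate power series over `L = ℤ[T,T⁻¹]` whose coefficients are the
`x(A)`, then with `qᵢ = (1 − T³Xᵢ)(1 + T·Xᵢ)`, `Q₀ᵢ = 1 − (T³ − T)Xᵢ`, `Q₁ᵢ = Xᵢ`,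
`(∏ i, qᵢ) · G = ∑_{J ∈ {0,1}^k} (∏ i, Q_{J i},ᵢ) · x(J)`. -/
theorem jones_generating_function (k : ℕ)
    (x : (Fin k → ℕ) → LaurentPolynomial ℤ)
    (hx : ∀ (i : Fin k) (A : Fin k → ℕ),
      x (Function.update A i (A i + 2)) =
        (T 3 - T 1) * x (Function.update A i (A i + 1)) + T 4 * x A)
    (G : MvPowerSeries (Fin k) (LaurentPolynomial ℤ))
    (hG : ∀ A : Fin k →₀ ℕ, MvPowerSeries.coeff A G = x ⇑A)
    (q Q₀ Q₁ : Fin k → MvPowerSeries (Fin k) (LaurentPolynomial ℤ))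
    (hq : ∀ i, q i =
        (1 - (MvPowerSeries.C (σ := Fin k) (R := LaurentPolynomial ℤ)) (T 3) * MvPowerSeries.X i) *
        (1 + (MvPowerSeries.C (σ := Fin k) (R := LaurentPolynomial ℤ)) (T 1) * MvPowerSeries.X i))
    (hQ₀ : ∀ i, Q₀ i =
        1 - (MvPowerSeries.C (σ := Fin k) (R := LaurentPolynomial ℤ)) (T 3 - T 1) * MvPowerSeries.X i)
    (hQ₁ : ∀ i, Q₁ i = MvPowerSeries.X i) :
    (∏ i, q i) * G =
      ∑ J : Fin k → Fin 2,
        (∏ i, if J i = 0 then Q₀ i else Q₁ i) *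
          (MvPowerSeries.C (σ := Fin k) (R := LaurentPolynomial ℤ)) (x fun i => (J i : ℕ)) := by
  classical
  have hT : (MvPowerSeries.C (σ := Fin k) (R := LaurentPolynomial ℤ)) ((T 4 : LaurentPolynomial ℤ))
      = (MvPowerSeries.C (σ := Fin k) (R := LaurentPolynomial ℤ)) (T 3)
        * (MvPowerSeries.C (σ := Fin k) (R := LaurentPolynomial ℤ)) (T 1) := by
    rw [← map_mul, ← T_add]
    norm_num
  have hqe : ∀ i, q i = 1 - (MvPowerSeries.C (σ := Fin k) (R := LaurentPolynomial ℤ)) (T 3 - T 1)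
      * MvPowerSeries.X i
      - (MvPowerSeries.C (σ := Fin k) (R := LaurentPolynomial ℤ)) (T 4) * MvPowerSeries.X i ^ 2 := by
    intro i
    rw [hq i, map_sub, hT]
    ring
  have hGE : G = Eser k x ∅ := by
    refine MvPowerSeries.ext fun A => ?_
    rw [hG, coeff_Eser]
    simp
  have hfilter : Finset.univ.filter
      (fun J : Fin k → Fin 2 => ∀ j, j ∉ (Finset.univ : Finset (Fin k)) → J j = 0)
      = Finset.univ := by
    ext J; simp
  calc (∏ i, q i) * G
      = (∏ i, (1 - (MvPowerSeries.C (σ := Fin k) (R := LaurentPolynomial ℤ)) (T 3 - T 1)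
          * MvPowerSeries.X i
          - (MvPowerSeries.C (σ := Fin k) (R := LaurentPolynomial ℤ)) (T 4) * MvPowerSeries.X i ^ 2))
        * Eser k x ∅ := by
        rw [hGE]
        congr 1
        exact Finset.prod_congr rfl fun i _ => hqe i
    _ = ∑ J ∈ Finset.univ.filter
          (fun J : Fin k → Fin 2 => ∀ j, j ∉ (Finset.univ : Finset (Fin k)) → J j = 0),
        (∏ i, if J i = 0 then
            1 - (MvPowerSeries.C (σ := Fin k) (R := LaurentPolynomial ℤ)) (T 3 - T 1) * MvPowerSeries.X i
          else MvPowerSeries.X i)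
          * Eser k (fun A => x fun j => if j ∈ (Finset.univ : Finset (Fin k)) then (J j : ℕ)
              else A j) Finset.univ := main_sum x _ _ hx Finset.univ
    _ = ∑ J : Fin k → Fin 2,
        (∏ i, if J i = 0 then Q₀ i else Q₁ i) *
          (MvPowerSeries.C (σ := Fin k) (R := LaurentPolynomial ℤ)) (x fun i => (J i : ℕ)) := by
        rw [hfilter]
        refine Finset.sum_congr rfl fun J _ => ?_
        congr 1
        · exact Finset.prod_congr rfl fun i _ => by rw [hQ₀ i, hQ₁ i]
        · refine MvPowerSeries.ext fun B => ?_
          rw [coeff_Eser, MvPowerSeries.coeff_C]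
          by_cases hB : B = 0
          · rw [if_pos (by simp [hB]), if_pos hB]
            congr 1
            funext j
            simp
          · rw [if_neg, if_neg hB]
            intro h
            exact hB (Finsupp.ext fun j => h j (Finset.mem_univ j))
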